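/- The function W : (ℂ∖{0})² → ℂ defined by W(y_1, y_2) = y_1 + y_2 + y_1^{−1}y_2^{−1} + 3·y_2^{−1} + y_1·y_2^{−1} has exactly 5 critical points, and each of these critical points is nondegenerate. -/

import Mathlib

/-- The potential function of the monotone fiber `L(2,2)` in `X̂₂` with bulk deformation `e^a + e^{-a} = 3` (energy factor dropped). -/
noncomputable def W : ℂ → ℂ → ℂ := fun y₁ y₂ =>
  y₁ + y₂ + y₁⁻¹ * y₂⁻¹ + 3 * y₂⁻¹ + y₁ * y₂⁻¹

/-- A point of `(ℂ∖{0})²` is a critical point of `W` if both partial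
derivatives of `W` vanish there. -/
def IsCritPt (p : ℂ × ℂ) : Prop :=
  p.1 ≠ 0 ∧ p.2 ≠ 0 ∧
    deriv (fun z => W z p.2) p.1 = 0 ∧ deriv (fun z => W p.1 z) p.2 = 0

lemma Wd1 (x y : ℂ) (hx : x ≠ 0) :
    deriv (fun z => W z y) x = 1 - (x ^ 2)⁻¹ * y⁻¹ + y⁻¹ := by
  have h1 : HasDerivAt (fun z : ℂ => z + y + z⁻¹ * y⁻¹ + 3 * y⁻¹ + z * y⁻¹)
      (1 + -(x ^ 2)⁻¹ * y⁻¹ + 1 * y⁻¹) x :=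
    ((((hasDerivAt_id x).add_const y).add
      ((hasDerivAt_inv hx).mul_const y⁻¹)).add_const (3 * y⁻¹)).add
      ((hasDerivAt_id x).mul_const y⁻¹)
  have h : HasDerivAt (fun z : ℂ => W z y) (1 - (x ^ 2)⁻¹ * y⁻¹ + y⁻¹) x := by
    exact h1.congr_deriv (by ring)
  exact h.deriv

lemma Wd2 (x y : ℂ) (hy : y ≠ 0) :
    deriv (fun z => W x z) y = 1 - (x⁻¹ + 3 + x) * (y ^ 2)⁻¹ := by
  have h1 : HasDerivAt (fun z : ℂ => x + z + x⁻¹ * z⁻¹ + 3 * z⁻¹ + x * z⁻¹)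
      (1 + x⁻¹ * -(y ^ 2)⁻¹ + 3 * -(y ^ 2)⁻¹ + x * -(y ^ 2)⁻¹) y :=
    ((((hasDerivAt_id y).const_add x).add
      ((hasDerivAt_inv hy).const_mul x⁻¹)).add
      ((hasDerivAt_inv hy).const_mul 3)).add ((hasDerivAt_inv hy).const_mul x)
  have h : HasDerivAt (fun z : ℂ => W x z) (1 - (x⁻¹ + 3 + x) * (y ^ 2)⁻¹) y := by
    exact h1.congr_deriv (by ring)
  exact h.deriv

lemma hasDerivAt_invsq (x : ℂ) (hx : x ≠ 0) :
    HasDerivAt (fun z : ℂ => (z ^ 2)⁻¹) (-(2 * x) / (x ^ 2) ^ 2) x := by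
  have := (hasDerivAt_pow 2 x).inv (pow_ne_zero 2 hx)
  exact this.congr_deriv (by norm_num)

lemma Wd11 (x y : ℂ) (hx : x ≠ 0) :
    deriv (deriv (fun z => W z y)) x = 2 * y⁻¹ * (x ^ 3)⁻¹ := by
  have hev : deriv (fun z => W z y) =ᶠ[nhds x]
      fun z => 1 - (z ^ 2)⁻¹ * y⁻¹ + y⁻¹ := by
    filter_upwards [isOpen_ne.mem_nhds hx] with z hz
    exact Wd1 z y hz
  rw [hev.deriv_eq]
  have h : HasDerivAt (fun z : ℂ => 1 - (z ^ 2)⁻¹ * y⁻¹ + y⁻¹)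
      (2 * y⁻¹ * (x ^ 3)⁻¹) x := by
    have h1 := (((hasDerivAt_invsq x hx).mul_const y⁻¹).const_sub 1).add_const y⁻¹
    refine h1.congr_deriv ?_
    field_simp
  exact h.deriv

lemma Wd22 (x y : ℂ) (hy : y ≠ 0) :
    deriv (deriv (fun z => W x z)) y = 2 * (x⁻¹ + 3 + x) * (y ^ 3)⁻¹ := by
  have hev : deriv (fun z => W x z) =ᶠ[nhds y]
      fun z => 1 - (x⁻¹ + 3 + x) * (z ^ 2)⁻¹ := by
    filter_upwards [isOpen_ne.mem_nhds hy] with z hz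
    exact Wd2 x z hz
  rw [hev.deriv_eq]
  have h : HasDerivAt (fun z : ℂ => 1 - (x⁻¹ + 3 + x) * (z ^ 2)⁻¹)
      (2 * (x⁻¹ + 3 + x) * (y ^ 3)⁻¹) y := by
    have h1 := ((hasDerivAt_invsq y hy).const_mul (x⁻¹ + 3 + x)).const_sub 1
    refine h1.congr_deriv ?_
    field_simp
  exact h.deriv

lemma Wd12 (x y : ℂ) (hx : x ≠ 0) (hy : y ≠ 0) :
    deriv (fun w => deriv (fun z => W z w) x) y
      = (x ^ 2)⁻¹ * (y ^ 2)⁻¹ - (y ^ 2)⁻¹ := by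
  have hfn : (fun w => deriv (fun z => W z w) x)
      = fun w => 1 - (x ^ 2)⁻¹ * w⁻¹ + w⁻¹ := funext fun w => Wd1 x w hx
  rw [hfn]
  have h : HasDerivAt (fun w : ℂ => 1 - (x ^ 2)⁻¹ * w⁻¹ + w⁻¹)
      ((x ^ 2)⁻¹ * (y ^ 2)⁻¹ - (y ^ 2)⁻¹) y := by
    have h1 := (((hasDerivAt_inv hy).const_mul (x ^ 2)⁻¹).const_sub 1).add
      (hasDerivAt_inv hy)
    exact h1.congr_deriv (by ring)
  exact h.deriv

/-- Characterization of critical points. -/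
lemma crit_char (x y : ℂ) :
    IsCritPt (x, y) ↔
      (x ^ 5 + 2 * x ^ 4 + x ^ 3 + 2 * x ^ 2 - 1 = 0 ∧ y = (1 - x ^ 2) / x ^ 2) := by
  constructor
  · rintro ⟨hx, hy, h1, h2⟩
    simp only at hx hy h1 h2
    rw [Wd1 x y hx] at h1
    rw [Wd2 x y hy] at h2
    field_simp at h1 h2
    have hA : x ^ 2 * y - 1 + x ^ 2 = 0 := by
      rcases mul_eq_zero.mp (show y * (x ^ 2 * y - 1 + x ^ 2) = 0 by
        linear_combination y * h1) with h | h
      · exact absurd h hy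
      · exact h
    have hy2 : y = (1 - x ^ 2) / x ^ 2 := by
      field_simp
      linear_combination hA
    refine ⟨?_, hy2⟩
    linear_combination (1 - x ^ 2 + x ^ 2 * y) * hA - x ^ 3 * h2
  · rintro ⟨hQ, hy2⟩
    have hx : x ≠ 0 := by
      intro h; rw [h] at hQ; norm_num at hQ
    have hx2 : 1 - x ^ 2 ≠ 0 := by
      intro h
      have h5 : (5 : ℂ) = 0 := by
        linear_combination (-(4:ℂ) - (2 * x - 3) * (x ^ 3 + 2 * x ^ 2 + 2 * x + 4)) * h
          - (2 * x - 3) * hQ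
      norm_num at h5
    have hy : y ≠ 0 := by
      rw [hy2]
      exact div_ne_zero hx2 (pow_ne_zero 2 hx)
    refine ⟨hx, hy, ?_, ?_⟩
    · simp only
      rw [Wd1 x y hx, hy2]
      field_simp
      ring
    · simp only
      rw [Wd2 x y hy, hy2]
      field_simp
      linear_combination (-1) * hQ

/-- The Hessian determinant
`(∂²W/∂y₁²)(∂²W/∂y₂²) - (∂²W/∂y₁∂y₂)²` of `W` at a point. -/
noncomputable def hessDet (p : ℂ × ℂ) : ℂ :=
  deriv (deriv (fun z => W z p.2)) p.1 * deriv (deriv (fun z => W p.1 z)) p.2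
    - (deriv (fun w => deriv (fun z => W z w) p.1) p.2) ^ 2

open Polynomial

noncomputable def Pq : ℂ[X] := X ^ 5 + 2 * X ^ 4 + X ^ 3 + 2 * X ^ 2 - 1

lemma Pq_natDegree : Pq.natDegree = 5 := by
  unfold Pq; compute_degree!

lemma Pq_ne_zero : Pq ≠ 0 := by
  intro h
  have := Pq_natDegree
  rw [h] at this
  simp at this

lemma Pq_deriv : derivative Pq = 5 * X ^ 4 + 8 * X ^ 3 + 3 * X ^ 2 + 4 * X := by
  unfold Pq
  simp [derivative_pow, map_ofNat]
  ring

lemma Pq_sep : Pq.Separable := by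
  rw [Polynomial.Separable, Pq_deriv]
  refine ⟨C (19015:ℂ)⁻¹ * (-19015 - 5528 * X - 13364 * X ^ 2 - 13390 * X ^ 3),
    C (19015:ℂ)⁻¹ * (-1382 + 7203 * X + 1532 * X ^ 2 + 3744 * X ^ 3 + 2678 * X ^ 4), ?_⟩
  have key : (-19015 - 5528 * X - 13364 * X ^ 2 - 13390 * X ^ 3) * Pq
      + (-1382 + 7203 * X + 1532 * X ^ 2 + 3744 * X ^ 3 + 2678 * X ^ 4)
        * (5 * X ^ 4 + 8 * X ^ 3 + 3 * X ^ 2 + 4 * X) = C 19015 := by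
    have hC : (C (19015:ℂ)) = (19015 : ℂ[X]) := map_ofNat C 19015
    rw [hC]
    unfold Pq
    ring
  calc C (19015:ℂ)⁻¹ * (-19015 - 5528 * X - 13364 * X ^ 2 - 13390 * X ^ 3) * Pq
      + C (19015:ℂ)⁻¹ * (-1382 + 7203 * X + 1532 * X ^ 2 + 3744 * X ^ 3 + 2678 * X ^ 4)
        * (5 * X ^ 4 + 8 * X ^ 3 + 3 * X ^ 2 + 4 * X)
      = C (19015:ℂ)⁻¹ * ((-19015 - 5528 * X - 13364 * X ^ 2 - 13390 * X ^ 3) * Pq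
        + (-1382 + 7203 * X + 1532 * X ^ 2 + 3744 * X ^ 3 + 2678 * X ^ 4)
          * (5 * X ^ 4 + 8 * X ^ 3 + 3 * X ^ 2 + 4 * X)) := by ring
    _ = 1 := by rw [key, ← C_mul]; norm_num

lemma rootSet_card :
    ({x : ℂ | x ^ 5 + 2 * x ^ 4 + x ^ 3 + 2 * x ^ 2 - 1 = 0}).ncard = 5 := by
  have hset : {x : ℂ | x ^ 5 + 2 * x ^ 4 + x ^ 3 + 2 * x ^ 2 - 1 = 0} = Pq.rootSet ℂ := by
    have haev : ∀ x : ℂ, aeval x Pq = x ^ 5 + 2 * x ^ 4 + x ^ 3 + 2 * x ^ 2 - 1 := by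
      intro x; simp [Pq]
    ext x
    simp [Polynomial.mem_rootSet, Pq_ne_zero, haev]
  rw [hset]
  have hcard := Polynomial.card_rootSet_eq_natDegree Pq_sep
    (IsAlgClosed.splits (k := ℂ) _)
  rw [Set.ncard_eq_toFinset_card']
  rw [Set.toFinset_card, hcard, Pq_natDegree]

/-- `W` has exactly 5 critical points in `(ℂ∖{0})²`, and each of them is
nondegenerate (nonvanishing Hessian determinant). -/
theorem W_critical_points :
    {p : ℂ × ℂ | IsCritPt p}.ncard = 5 ∧
      ∀ p : ℂ × ℂ, IsCritPt p → hessDet p ≠ 0 := by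
  constructor
  · have hset : {p : ℂ × ℂ | IsCritPt p}
        = (fun x : ℂ => (x, (1 - x ^ 2) / x ^ 2)) ''
          {x : ℂ | x ^ 5 + 2 * x ^ 4 + x ^ 3 + 2 * x ^ 2 - 1 = 0} := by
      ext ⟨x, y⟩
      simp only [Set.mem_setOf_eq, Set.mem_image, crit_char, Prod.mk.injEq]
      constructor
      · rintro ⟨hQ, hy⟩; exact ⟨x, hQ, rfl, hy.symm⟩
      · rintro ⟨a, ha, rfl, rfl⟩; exact ⟨ha, rfl⟩
    rw [hset, Set.ncard_image_of_injective _ (fun a b h => (Prod.ext_iff.mp h).1),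
      rootSet_card]
  · rintro ⟨x, y⟩ hp
    obtain ⟨hQ, hy2⟩ := (crit_char x y).mp hp
    have hx : x ≠ 0 := hp.1
    have hy : y ≠ 0 := hp.2.1
    have h43 : 4 - x ^ 3 ≠ 0 := by
      intro h
      have h38 : (3803 : ℂ) = 0 := by
        linear_combination (-183 + 120 * x + 46 * x ^ 2) * hQ
          - (-905 - 30 * x - 103 * x ^ 2 - 212 * x ^ 3 - 46 * x ^ 4) * h
      norm_num at h38
    have hval : hessDet (x, y) = (4 - x ^ 3) / (x ^ 3 * y ^ 2) := by
      unfold hessDet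
      simp only
      rw [Wd11 x y hx, Wd22 x y hy, Wd12 x y hx hy]
      have h1x : 1 - x ^ 2 ≠ 0 := by
        intro h
        have h5 : (5 : ℂ) = 0 := by
          linear_combination (-(4:ℂ) - (2 * x - 3) * (x ^ 3 + 2 * x ^ 2 + 2 * x + 4)) * h
            - (2 * x - 3) * hQ
        norm_num at h5
      have hxinv : x⁻¹ = x ^ 4 + 2 * x ^ 3 + x ^ 2 + 2 * x := by
        field_simp
        linear_combination -hQ
      have hyinv : y⁻¹ = (3 - 2 * x + 2 * x ^ 2 - x ^ 3 - 2 * x ^ 4) / 5 := by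
        rw [hy2, inv_div]
        rw [div_eq_div_iff (by exact h1x) (by norm_num : (5:ℂ) ≠ 0)]
        linear_combination (3 - 2 * x) * hQ
      simp only [div_eq_mul_inv, mul_inv, ← inv_pow]
      rw [hxinv, hyinv]
      linear_combination ((81 - 216*x - 54*x^2 - 483*x^3 + 964*x^4 - 5939*x^5 + 6187*x^6 - 17990*x^7 + 5949*x^8 - 9704*x^9 - 2895*x^10 + 20633*x^11 + 3753*x^12 + 21905*x^13 + 13197*x^14 - 5128*x^15 - 3399*x^16 - 14471*x^17 - 14511*x^18 - 6023*x^19 - 3226*x^20 + 1165*x^21 + 3778*x^22 + 2859*x^23 + 1960*x^24 + 1176*x^25 + 384*x^26 + 48*x^27) / 625) * hQ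
    rw [hval]
    exact div_ne_zero h43 (mul_ne_zero (pow_ne_zero 3 hx) (pow_ne_zero 2 hy))
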